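/- Let G be a finite simple graph with at least one edge and clique number ω = ω(G). Then for every integer r ≥ 1, λ₁(G)^r ≤ (1 − 1/ω) · w_r(G). -/

import Mathlib

/-- The spectral radius of a real matrix, defined as the supremum of its real
spectrum (the largest real eigenvalue; for symmetric or nonnegative matrices
this is the spectral radius). -/
noncomputable def lam1 {n : Type*} [Fintype n] [DecidableEq n] (A : Matrix n n ℝ) : ℝ :=
  sSup (spectrum ℝ A)

/-- `localCliqueNum G v` is the maximum size of a clique of `G` containing `v`. -/
noncomputable def localCliqueNum {V : Type*} (G : SimpleGraph V) (v : V) : ℕ :=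
  sSup {k | ∃ s : Finset V, G.IsNClique k s ∧ v ∈ s}

/-- `walkCount G r v` is the number of walks with `r` vertices starting at `v`,
i.e. `(A(G)^(r-1) · 𝟏)_v`. -/
noncomputable def walkCount {V : Type*} [Fintype V] [DecidableEq V] (G : SimpleGraph V)
    [DecidableRel G.Adj] (r : ℕ) (v : V) : ℝ :=
  Matrix.mulVec ((G.adjMatrix ℝ) ^ (r - 1)) (fun _ => 1) v

/-- The clique number of `G`: the maximum size of a clique of `G`. -/
noncomputable def cliqueNumber {V : Type*} (G : SimpleGraph V) : ℕ :=
  sSup {k | ∃ s : Finset V, G.IsNClique k s}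

open Matrix Finset

set_option linter.unusedSectionVars false

section Aux

variable {V : Type*} [Fintype V] [DecidableEq V] (G : SimpleGraph V) [DecidableRel G.Adj]

/-- Total number of walks with `m` edges: the sum of all entries of `A^m`. -/
noncomputable def Swalk (m : ℕ) : ℝ := ∑ u : V, ∑ w : V, ((G.adjMatrix ℝ) ^ m) u w

lemma adj_entry_nonneg (u w : V) : 0 ≤ (G.adjMatrix ℝ) u w := by
  rw [SimpleGraph.adjMatrix_apply]; split <;> norm_num

lemma adj_entry_le_one (u w : V) : (G.adjMatrix ℝ) u w ≤ 1 := by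
  rw [SimpleGraph.adjMatrix_apply]; split <;> norm_num

lemma pow_entry_nonneg (m : ℕ) (u w : V) : 0 ≤ ((G.adjMatrix ℝ) ^ m) u w := by
  induction m generalizing u w with
  | zero =>
    simp only [pow_zero, Matrix.one_apply]
    split <;> norm_num
  | succ k ih =>
    rw [pow_succ, Matrix.mul_apply]
    exact Finset.sum_nonneg fun x _ => mul_nonneg (ih u x) (adj_entry_nonneg G x w)

lemma Swalk_nonneg (m : ℕ) : 0 ≤ Swalk G m :=
  Finset.sum_nonneg fun u _ => Finset.sum_nonneg fun w _ => pow_entry_nonneg G m u w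

lemma Swalk_succ_le (m : ℕ) : Swalk G (m + 1) ≤ (Fintype.card V : ℝ) * Swalk G m := by
  have h1 : ∀ u w : V, ((G.adjMatrix ℝ) ^ (m+1)) u w ≤ ∑ x : V, ((G.adjMatrix ℝ) ^ m) x w := by
    intro u w
    rw [pow_succ', Matrix.mul_apply]
    apply Finset.sum_le_sum
    intro x _
    calc (G.adjMatrix ℝ) u x * ((G.adjMatrix ℝ) ^ m) x w
        ≤ 1 * ((G.adjMatrix ℝ) ^ m) x w :=
          mul_le_mul_of_nonneg_right (adj_entry_le_one G u x) (pow_entry_nonneg G m x w)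
      _ = ((G.adjMatrix ℝ) ^ m) x w := one_mul _
  calc Swalk G (m+1) ≤ ∑ _u : V, ∑ w : V, ∑ x : V, ((G.adjMatrix ℝ) ^ m) x w := by
        apply Finset.sum_le_sum; intro u _
        exact Finset.sum_le_sum fun w _ => h1 u w
    _ = (Fintype.card V : ℝ) * Swalk G m := by
        rw [Finset.sum_const, Finset.card_univ, nsmul_eq_mul]
        congr 1
        rw [Finset.sum_comm]
        rfl

lemma adj_isHermitian : (G.adjMatrix ℝ).IsHermitian := by
  ext i j
  simp [Matrix.conjTranspose_apply, SimpleGraph.adjMatrix_apply, G.adj_comm i j]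

lemma lam_pow_le [Nonempty V] (m : ℕ) : (lam1 (G.adjMatrix ℝ)) ^ m ≤ Swalk G m := by
  classical
  set A := G.adjMatrix ℝ with hAdef
  have hA : A.IsHermitian := adj_isHermitian G
  have hspec : spectrum ℝ A = Set.range hA.eigenvalues := hA.spectrum_real_eq_range_eigenvalues
  have hmem : lam1 A ∈ spectrum ℝ A := by
    rw [lam1, hspec] at *
    exact Set.Nonempty.csSup_mem (Set.range_nonempty _) (Set.finite_range _)
  rw [hspec] at hmem
  obtain ⟨i₀, hi₀⟩ := hmem
  set v : V → ℝ := (WithLp.equiv 2 (V → ℝ)) (hA.eigenvectorBasis i₀) with hvdef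
  have hv : A *ᵥ v = lam1 A • v := by
    rw [hvdef, ← hi₀]
    exact hA.mulVec_eigenvectorBasis i₀
  have hvne : v ≠ 0 := by
    intro h
    apply hA.eigenvectorBasis.orthonormal.ne_zero i₀
    apply (WithLp.equiv 2 (V → ℝ)).injective
    rw [← hvdef, h]
    simp
  have hpow : ∀ k : ℕ, (A ^ k) *ᵥ v = (lam1 A) ^ k • v := by
    intro k
    induction k with
    | zero => simp
    | succ k ih =>
      rw [pow_succ', ← Matrix.mulVec_mulVec, ih, Matrix.mulVec_smul, hv, smul_smul, pow_succ,
        mul_comm]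
  obtain ⟨u₀, -, hu₀⟩ := Finset.exists_max_image Finset.univ (fun u => |v u|)
    Finset.univ_nonempty
  have hvu₀ : 0 < |v u₀| := by
    obtain ⟨w, hw⟩ := Function.ne_iff.mp hvne
    exact lt_of_lt_of_le (abs_pos.mpr hw) (hu₀ w (Finset.mem_univ w))
  have hrow : |lam1 A ^ m| * |v u₀| ≤ (∑ w : V, (A ^ m) u₀ w) * |v u₀| := by
    have heval : lam1 A ^ m * v u₀ = ∑ w : V, (A ^ m) u₀ w * v w := by
      have := congrFun (hpow m) u₀
      rw [Matrix.mulVec, dotProduct] at this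
      simpa [Pi.smul_apply] using this.symm
    calc |lam1 A ^ m| * |v u₀| = |∑ w : V, (A ^ m) u₀ w * v w| := by
          rw [← abs_mul, heval]
      _ ≤ ∑ w : V, |(A ^ m) u₀ w * v w| := Finset.abs_sum_le_sum_abs _ _
      _ ≤ ∑ w : V, (A ^ m) u₀ w * |v u₀| := by
          apply Finset.sum_le_sum
          intro w _
          rw [abs_mul, abs_of_nonneg (pow_entry_nonneg G m u₀ w)]
          exact mul_le_mul_of_nonneg_left (hu₀ w (Finset.mem_univ w)) (pow_entry_nonneg G m u₀ w)
      _ = (∑ w : V, (A ^ m) u₀ w) * |v u₀| := by rw [Finset.sum_mul]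
  have h2 : |lam1 A ^ m| ≤ ∑ w : V, (A ^ m) u₀ w :=
    le_of_mul_le_mul_right (by simpa using hrow) hvu₀
  calc lam1 A ^ m ≤ |lam1 A ^ m| := le_abs_self _
    _ ≤ ∑ w : V, (A ^ m) u₀ w := h2
    _ ≤ Swalk G m := Finset.single_le_sum
        (f := fun u => ∑ w : V, (A ^ m) u w)
        (fun u _ => Finset.sum_nonneg fun w _ => pow_entry_nonneg G m u w)
        (Finset.mem_univ u₀)

lemma cliqueNumber_bddAbove : BddAbove {k | ∃ s : Finset V, G.IsNClique k s} := by
  refine ⟨Fintype.card V, fun k hk => ?_⟩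
  obtain ⟨s, hs⟩ := hk
  rw [← hs.card_eq]
  exact s.card_le_univ.trans_eq (Finset.card_univ)

lemma clique_card_le (s : Finset V) (h : (↑s : Set V).Pairwise G.Adj) :
    s.card ≤ cliqueNumber G :=
  le_csSup (cliqueNumber_bddAbove G) ⟨s, ⟨h, rfl⟩⟩

lemma two_le_cliqueNumber (hedge : ∃ u v, G.Adj u v) : 2 ≤ cliqueNumber G := by
  obtain ⟨u, v, huv⟩ := hedge
  have h2 : ({u, v} : Finset V).card = 2 := Finset.card_pair huv.ne
  have hcl : (↑({u, v} : Finset V) : Set V).Pairwise G.Adj := by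
    rw [Finset.coe_insert, Finset.coe_singleton]
    letI : Std.Symm G.Adj := G.symm
    exact (Set.pairwise_pair_of_symm).mpr fun _ => huv
  calc 2 = ({u, v} : Finset V).card := h2.symm
    _ ≤ cliqueNumber G := clique_card_le G _ hcl

lemma motzkin_straus (hω : 1 ≤ cliqueNumber G) :
    ∀ N : ℕ, ∀ y : V → ℝ, (∀ u, 0 ≤ y u) →
      ((Finset.univ.filter (fun u => y u ≠ 0)).card ≤ N) →
      ∑ u : V, ∑ w : V, (G.adjMatrix ℝ) u w * y u * y w ≤
        (1 - 1 / (cliqueNumber G : ℝ)) * (∑ u : V, y u) ^ 2 := by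
  intro N
  induction N with
  | zero =>
    intro y hy hcard
    have hall : ∀ u, y u = 0 := by
      intro u
      by_contra h
      have : u ∈ Finset.univ.filter (fun u => y u ≠ 0) := by
        simp [Finset.mem_filter, h]
      have := Finset.card_pos.mpr ⟨u, this⟩
      omega
    simp [hall]
  | succ N ih =>
    intro y hy hcard
    by_cases hcase : ∃ u v, u ≠ v ∧ y u ≠ 0 ∧ y v ≠ 0 ∧ ¬ G.Adj u v
    · obtain ⟨u, v, hne, hyu, hyv, hnadj⟩ := hcase
      wlog hw : (∑ w : V, (G.adjMatrix ℝ) v w * y w) ≤ (∑ w : V, (G.adjMatrix ℝ) u w * y w)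
        generalizing u v
      · exact this v u hne.symm hyv hyu (fun h => hnadj h.symm) (le_of_not_ge hw)
      set A := G.adjMatrix ℝ with hAdef
      have hsymm : ∀ a b : V, A a b = A b a := by
        intro a b
        simp [hAdef, SimpleGraph.adjMatrix_apply, G.adj_comm a b]
      set d : V → ℝ := fun w => (if w = u then y v else 0) - (if w = v then y v else 0) with hd
      set y' : V → ℝ := fun w => y w + d w with hy'
      have hyvpos : 0 < y v := lt_of_le_of_ne (hy v) (Ne.symm hyv)
      have hy'u : y' u = y u + y v := by simp [hy', hd, hne]
      have hy'v : y' v = 0 := by simp [hy', hd, hne.symm]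
      have hy'other : ∀ w, w ≠ u → w ≠ v → y' w = y w := by
        intro w h1 h2; simp [hy', hd, h1, h2]
      have hy'nonneg : ∀ w, 0 ≤ y' w := by
        intro w
        by_cases h1 : w = u
        · subst h1; rw [hy'u]; exact add_nonneg (hy w) (hy v)
        · by_cases h2 : w = v
          · subst h2; rw [hy'v]
          · rw [hy'other w h1 h2]; exact hy w
      -- collapse lemma
      have hcol : ∀ f : V → ℝ, ∑ b : V, f b * d b = f u * y v - f v * y v := by
        intro f
        have : ∀ b, f b * d b =
            (if b = u then f b * y v else 0) - (if b = v then f b * y v else 0) := by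
          intro b
          simp only [hd, mul_sub, mul_ite, mul_zero]
        rw [Finset.sum_congr rfl (fun b _ => this b), Finset.sum_sub_distrib,
          Finset.sum_ite_eq', Finset.sum_ite_eq']
        simp
      -- sums agree
      have hsum : ∑ w : V, y' w = ∑ w : V, y w := by
        have : ∀ w, y' w = y w + (1 : ℝ) * d w := by intro w; simp [hy']
        rw [Finset.sum_congr rfl (fun w _ => this w), Finset.sum_add_distrib,
          hcol (fun _ => (1:ℝ))]
        ring
      -- support shrinks
      have hsupp : (Finset.univ.filter (fun w => y' w ≠ 0)) ⊆
          (Finset.univ.filter (fun w => y w ≠ 0)).erase v := by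
        intro w hwmem
        rw [Finset.mem_filter] at hwmem
        rw [Finset.mem_erase, Finset.mem_filter]
        have hwv : w ≠ v := by
          intro h; subst h; exact hwmem.2 hy'v
        refine ⟨hwv, Finset.mem_univ w, ?_⟩
        by_cases h1 : w = u
        · subst h1; exact hyu
        · rw [hy'other w h1 hwv] at hwmem; exact hwmem.2
      have hvmem : v ∈ Finset.univ.filter (fun u => y u ≠ 0) := by
        simp [Finset.mem_filter, hyv]
      have hcard' : (Finset.univ.filter (fun w => y' w ≠ 0)).card ≤ N := by
        have := Finset.card_le_card hsupp
        rw [Finset.card_erase_of_mem hvmem] at this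
        omega
      -- quadratic form increases
      have hA0 : A u u = 0 ∧ A v v = 0 ∧ A u v = 0 ∧ A v u = 0 := by
        have hvu : ¬ G.Adj v u := fun h => hnadj (G.adj_symm h)
        refine ⟨?_, ?_, ?_, ?_⟩ <;> simp [hAdef, SimpleGraph.adjMatrix_apply, hnadj, hvu]
      have hT2 : ∑ a : V, ∑ b : V, A a b * y a * d b =
          (∑ w : V, A u w * y w) * y v - (∑ w : V, A v w * y w) * y v := by
        have h1 : ∀ a : V, ∑ b : V, A a b * y a * d b = A a u * y a * y v - A a v * y a * y v := by
          intro a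
          have := hcol (fun b => A a b * y a)
          simpa using this
        rw [Finset.sum_congr rfl (fun a _ => h1 a), Finset.sum_sub_distrib, ← Finset.sum_mul,
          ← Finset.sum_mul]
        congr 2
        · exact Finset.sum_congr rfl (fun a _ => by rw [hsymm a u])
        · exact Finset.sum_congr rfl (fun a _ => by rw [hsymm a v])
      have hT3 : ∑ a : V, ∑ b : V, A a b * y b * d a =
          (∑ w : V, A u w * y w) * y v - (∑ w : V, A v w * y w) * y v := by
        have h1 : ∀ a : V, ∑ b : V, A a b * y b * d a = (∑ b : V, A a b * y b) * d a := by
          intro a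
          rw [Finset.sum_mul]
        rw [Finset.sum_congr rfl (fun a _ => h1 a), hcol (fun a => ∑ b : V, A a b * y b)]
      have hT4 : ∑ a : V, ∑ b : V, A a b * d a * d b = 0 := by
        have h1 : ∀ a : V, ∑ b : V, A a b * d a * d b = A a u * d a * y v - A a v * d a * y v := by
          intro a
          have := hcol (fun b => A a b * d a)
          simpa using this
        rw [Finset.sum_congr rfl (fun a _ => h1 a), Finset.sum_sub_distrib]
        have h2 : ∑ a : V, A a u * d a * y v = 0 := by
          have : ∀ a : V, A a u * d a * y v = (A a u * y v) * d a := fun a => by ring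
          rw [Finset.sum_congr rfl (fun a _ => this a), hcol (fun a => A a u * y v)]
          rw [hA0.1, hA0.2.2.2]
          ring
        have h3 : ∑ a : V, A a v * d a * y v = 0 := by
          have : ∀ a : V, A a v * d a * y v = (A a v * y v) * d a := fun a => by ring
          rw [Finset.sum_congr rfl (fun a _ => this a), hcol (fun a => A a v * y v)]
          rw [hA0.2.1, hA0.2.2.1]
          ring
        rw [h2, h3, sub_zero]
      have hQ : ∑ a : V, ∑ b : V, A a b * y a * y b ≤ ∑ a : V, ∑ b : V, A a b * y' a * y' b := by
        have hexp : ∀ a b : V, A a b * y' a * y' b =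
            A a b * y a * y b + A a b * y a * d b + A a b * y b * d a
              + A a b * d a * d b := by
          intro a b; simp only [hy']; ring
        have hrw : ∑ a : V, ∑ b : V, A a b * y' a * y' b =
            (∑ a : V, ∑ b : V, A a b * y a * y b)
            + (∑ a : V, ∑ b : V, A a b * y a * d b)
            + (∑ a : V, ∑ b : V, A a b * y b * d a)
            + (∑ a : V, ∑ b : V, A a b * d a * d b) := by
          rw [Finset.sum_congr rfl (fun a _ => Finset.sum_congr rfl (fun b _ => hexp a b))]
          simp only [Finset.sum_add_distrib]
        rw [hrw, hT2, hT3, hT4]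
        nlinarith [hyvpos.le, hw]
      calc ∑ a : V, ∑ b : V, A a b * y a * y b
          ≤ ∑ a : V, ∑ b : V, A a b * y' a * y' b := hQ
        _ ≤ (1 - 1 / (cliqueNumber G : ℝ)) * (∑ w : V, y' w) ^ 2 := ih y' hy'nonneg hcard'
        _ = (1 - 1 / (cliqueNumber G : ℝ)) * (∑ w : V, y w) ^ 2 := by rw [hsum]
    · -- support is a clique
      push_neg at hcase
      set A := G.adjMatrix ℝ with hAdef
      set s := Finset.univ.filter (fun u => y u ≠ 0) with hs
      have hmem : ∀ {x : V}, x ∈ s → y x ≠ 0 := fun hx => (Finset.mem_filter.mp hx).2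
      have hout : ∀ x, x ∉ s → y x = 0 := by
        intro x hx
        by_contra h
        exact hx (Finset.mem_filter.mpr ⟨Finset.mem_univ x, h⟩)
      have hTsum : ∑ u ∈ s, y u = ∑ u : V, y u :=
        Finset.sum_subset (Finset.subset_univ s) (fun x _ hx => hout x hx)
      have hQrestrict : ∑ u : V, ∑ w : V, A u w * y u * y w
          = ∑ u ∈ s, ∑ w ∈ s, A u w * y u * y w := by
        have h1 : ∀ u : V, ∑ w : V, A u w * y u * y w = ∑ w ∈ s, A u w * y u * y w :=
          fun u => (Finset.sum_subset (Finset.subset_univ s)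
            (fun w _ hw => by rw [hout w hw, mul_zero])).symm
        rw [Finset.sum_congr rfl (fun u _ => h1 u)]
        exact (Finset.sum_subset (Finset.subset_univ s)
          (fun u _ hu => Finset.sum_eq_zero fun w _ => by rw [hout u hu, mul_zero, zero_mul])).symm
      have hclique : (↑s : Set V).Pairwise G.Adj := by
        intro a ha b hb hab
        exact hcase a b hab (hmem (Finset.mem_coe.mp ha)) (hmem (Finset.mem_coe.mp hb))
      have hcard_le : s.card ≤ cliqueNumber G := clique_card_le G s hclique
      have hterm : ∀ u ∈ s, ∀ w ∈ s, A u w * y u * y w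
          = y u * y w - (if u = w then y u * y w else 0) := by
        intro u hu w hw
        by_cases h : u = w
        · subst h
          rw [if_pos rfl]
          have : A u u = 0 := by simp [hAdef, SimpleGraph.adjMatrix_apply]
          rw [this]
          ring
        · have hadj := hcase u w h (hmem hu) (hmem hw)
          rw [if_neg h]
          have : A u w = 1 := by simp [hAdef, SimpleGraph.adjMatrix_apply, hadj]
          rw [this]
          ring
      have hQval : ∑ u ∈ s, ∑ w ∈ s, A u w * y u * y w
          = (∑ u ∈ s, y u) ^ 2 - ∑ u ∈ s, (y u) ^ 2 := by
        rw [Finset.sum_congr rfl (fun u hu => Finset.sum_congr rfl (fun w hw => hterm u hu w hw))]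
        have h2 : ∀ u ∈ s, ∑ w ∈ s, (y u * y w - (if u = w then y u * y w else 0))
            = y u * (∑ w ∈ s, y w) - (y u) ^ 2 := by
          intro u hu
          rw [Finset.sum_sub_distrib, ← Finset.mul_sum, Finset.sum_ite_eq, if_pos hu]
          ring_nf
        rw [Finset.sum_congr rfl h2, Finset.sum_sub_distrib, ← Finset.sum_mul]
        ring
      rw [hQrestrict, hQval, ← hTsum]
      rcases Finset.eq_empty_or_nonempty s with hse | hsne
      · simp [hse]
      · have hcardpos : 0 < s.card := Finset.card_pos.mpr hsne
        have hcardposR : (0:ℝ) < (s.card : ℝ) := by exact_mod_cast hcardpos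
        have hωposR : (0:ℝ) < (cliqueNumber G : ℝ) := by exact_mod_cast hω
        have hcardleR : (s.card : ℝ) ≤ (cliqueNumber G : ℝ) := by exact_mod_cast hcard_le
        set T := ∑ u ∈ s, y u with hT
        have hCS : T ^ 2 ≤ (s.card : ℝ) * ∑ u ∈ s, (y u) ^ 2 := sq_sum_le_card_mul_sum_sq
        have h5 : T ^ 2 / (cliqueNumber G : ℝ) ≤ T ^ 2 / (s.card : ℝ) :=
          div_le_div_of_nonneg_left (sq_nonneg T) hcardposR hcardleR
        have h6 : T ^ 2 / (s.card : ℝ) ≤ ∑ u ∈ s, (y u) ^ 2 :=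
          (div_le_iff₀ hcardposR).mpr (by linarith)
        have h7 : (1 - 1 / (cliqueNumber G : ℝ)) * T ^ 2
            = T ^ 2 - T ^ 2 / (cliqueNumber G : ℝ) := by
          field_simp
        linarith

lemma Swalk_key (hω : 1 ≤ cliqueNumber G) (m : ℕ) :
    Swalk G (2*m+1) ≤ (1 - 1 / (cliqueNumber G : ℝ)) * (Swalk G m) ^ 2 := by
  classical
  set A := G.adjMatrix ℝ with hAdef
  set y : V → ℝ := (A ^ m) *ᵥ (fun _ => 1) with hy
  have hynn : ∀ u, 0 ≤ y u := by
    intro u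
    rw [hy]
    exact Finset.sum_nonneg fun w _ => by
      simpa using mul_nonneg (pow_entry_nonneg G m u w) zero_le_one
  have hsum : ∑ u : V, y u = Swalk G m := by
    simp [hy, Matrix.mulVec, dotProduct, Swalk]
    rfl
  have htr : (A ^ m)ᵀ = A ^ m := by
    rw [Matrix.transpose_pow, hAdef, SimpleGraph.transpose_adjMatrix]
  have hquad : ∑ u : V, ∑ w : V, A u w * y u * y w = Swalk G (2*m+1) := by
    have h1 : ∑ u : V, ∑ w : V, A u w * y u * y w = y ⬝ᵥ (A *ᵥ y) := by
      rw [dotProduct]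
      apply Finset.sum_congr rfl
      intro u _
      rw [Matrix.mulVec, dotProduct, Finset.mul_sum]
      exact Finset.sum_congr rfl fun w _ => by ring
    have h2 : A *ᵥ y = (A ^ (m+1)) *ᵥ (fun _ => 1) := by
      rw [hy, Matrix.mulVec_mulVec, ← pow_succ']
    have h3 : y ⬝ᵥ ((A ^ (m+1)) *ᵥ (fun _ => 1)) =
        (fun _ => (1:ℝ)) ⬝ᵥ ((A ^ (2*m+1)) *ᵥ (fun _ => 1)) := by
      rw [hy, ← htr, Matrix.mulVec_transpose, ← dotProduct_mulVec,
        Matrix.mulVec_mulVec, ← pow_add]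
      have : m + (m + 1) = 2*m+1 := by omega
      rw [this]
    have h4 : (fun _ => (1:ℝ)) ⬝ᵥ ((A ^ (2*m+1)) *ᵥ (fun _ => 1)) = Swalk G (2*m+1) := by
      simp [dotProduct, Matrix.mulVec, Swalk]
      rfl
    rw [h1, h2, h3, h4]
  have hcard : (Finset.univ.filter (fun u => y u ≠ 0)).card ≤ Fintype.card V :=
    (Finset.card_filter_le _ _).trans_eq Finset.card_univ
  have := motzkin_straus G hω (Fintype.card V) y hynn hcard
  rw [hquad, hsum] at this
  exact this

lemma boot (hedge : ∃ u v, G.Adj u v) :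
    ∀ t m : ℕ, ((lam1 (G.adjMatrix ℝ)) ^ (m+1)) ^ (2^t) ≤
      (1 - 1 / (cliqueNumber G : ℝ)) ^ (2^t - 1) * (Fintype.card V : ℝ) * (Swalk G m) ^ (2^t) := by
  classical
  obtain ⟨u0, v0, huv⟩ := hedge
  haveI : Nonempty V := ⟨u0⟩
  have hω2 : 2 ≤ cliqueNumber G := two_le_cliqueNumber G ⟨u0, v0, huv⟩
  have hω1 : 1 ≤ cliqueNumber G := le_trans one_le_two hω2
  have hω2R : (2:ℝ) ≤ (cliqueNumber G : ℝ) := by exact_mod_cast hω2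
  have hcnn : 0 ≤ 1 - 1 / (cliqueNumber G : ℝ) := by
    have h1 : 1 / (cliqueNumber G : ℝ) ≤ 1 / 2 :=
      one_div_le_one_div_of_le (by norm_num) hω2R
    linarith
  intro t
  induction t with
  | zero =>
    intro m
    simp only [pow_zero, pow_one, Nat.sub_self, one_mul]
    exact (lam_pow_le G (m+1)).trans (Swalk_succ_le G m)
  | succ t ih =>
    intro m
    have e1 : ((lam1 (G.adjMatrix ℝ)) ^ (m+1)) ^ (2^(t+1)) =
        ((lam1 (G.adjMatrix ℝ)) ^ (2*m+1+1)) ^ (2^t) := by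
      rw [← pow_mul, ← pow_mul, pow_succ]
      ring_nf
    rw [e1]
    have hXpos : 1 ≤ 2^t := Nat.one_le_two_pow
    have e2 : 2^t - 1 + 2^t = 2^(t+1) - 1 := by
      rw [pow_succ]; omega
    have e3 : 2 * 2^t = 2^(t+1) := by rw [pow_succ]; ring
    calc ((lam1 (G.adjMatrix ℝ)) ^ (2*m+1+1)) ^ (2^t)
        ≤ (1 - 1 / (cliqueNumber G : ℝ)) ^ (2^t - 1) * (Fintype.card V : ℝ) *
            (Swalk G (2*m+1)) ^ (2^t) := ih (2*m+1)
      _ ≤ (1 - 1 / (cliqueNumber G : ℝ)) ^ (2^t - 1) * (Fintype.card V : ℝ) *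
            ((1 - 1 / (cliqueNumber G : ℝ)) * (Swalk G m) ^ 2) ^ (2^t) := by
          apply mul_le_mul_of_nonneg_left
          · exact pow_le_pow_left₀ (Swalk_nonneg G _) (Swalk_key G hω1 m) _
          · exact mul_nonneg (pow_nonneg hcnn _) (Nat.cast_nonneg _)
      _ = (1 - 1 / (cliqueNumber G : ℝ)) ^ (2^(t+1) - 1) * (Fintype.card V : ℝ) *
            (Swalk G m) ^ (2^(t+1)) := by
          rw [mul_pow, ← pow_mul, ← e2, ← e3, pow_add]
          ring

end Aux

/-- Nikiforov's walk inequality: for a graph `G` with at least one edge and clique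
number `ω`, and every integer `r ≥ 1`, `λ₁(G)^r ≤ (1 - 1/ω) w_r(G)`. -/
theorem nikiforov_walk_inequality
    {V : Type*} [Fintype V] [DecidableEq V] (G : SimpleGraph V) [DecidableRel G.Adj]
    (hedge : ∃ u v, G.Adj u v) (r : ℕ) (hr : 1 ≤ r) :
    lam1 (G.adjMatrix ℝ) ^ r ≤
      (1 - 1 / (cliqueNumber G : ℝ)) * ∑ v : V, walkCount G r v := by
  classical
  obtain ⟨u0, v0, huv⟩ := hedge
  haveI : Nonempty V := ⟨u0⟩
  have hω2 : 2 ≤ cliqueNumber G := two_le_cliqueNumber G ⟨u0, v0, huv⟩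
  have hω2R : (2:ℝ) ≤ (cliqueNumber G : ℝ) := by exact_mod_cast hω2
  have hcpos : 0 < 1 - 1 / (cliqueNumber G : ℝ) := by
    have h1 : 1 / (cliqueNumber G : ℝ) ≤ 1 / 2 :=
      one_div_le_one_div_of_le (by norm_num) hω2R
    linarith
  obtain ⟨m, rfl⟩ : ∃ m, r = m + 1 := ⟨r - 1, (Nat.sub_add_cancel hr).symm⟩
  have hwsum : ∑ v : V, walkCount G (m+1) v = Swalk G m := by
    simp [walkCount, Swalk, Matrix.mulVec, dotProduct]
  rw [hwsum]
  set c : ℝ := 1 - 1 / (cliqueNumber G : ℝ) with hc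
  set q : ℝ := lam1 (G.adjMatrix ℝ) ^ (m+1) with hq
  set S : ℝ := Swalk G m with hS
  set n : ℝ := (Fintype.card V : ℝ) with hn
  by_contra hcon
  push_neg at hcon
  have hS0 : 0 ≤ S := Swalk_nonneg G m
  have hbase : q ≤ n * S := (lam_pow_le G (m+1)).trans (Swalk_succ_le G m)
  rcases eq_or_lt_of_le hS0 with hSz | hSpos
  · have hq0 : q ≤ 0 := by rw [← hSz, mul_zero] at hbase; exact hbase
    have hcz : c * S = 0 := by rw [← hSz, mul_zero]
    rw [hcz] at hcon
    linarith
  · have hb : 0 < c * S := mul_pos hcpos hSpos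
    have hρ : 1 < q / (c * S) := (one_lt_div hb).mpr hcon
    have hkey : ∀ t : ℕ, q ^ (2^t) * c ≤ n * (c * S) ^ (2^t) := by
      intro t
      have h1 := boot G ⟨u0, v0, huv⟩ t m
      have hX : 1 ≤ 2^t := Nat.one_le_two_pow
      have h2 : c ^ (2^t - 1) * c = c ^ (2^t) := by
        rw [← pow_succ]
        congr 1
        omega
      calc q ^ (2^t) * c ≤ (c ^ (2^t - 1) * n * S ^ (2^t)) * c :=
            mul_le_mul_of_nonneg_right h1 hcpos.le
        _ = (c ^ (2^t - 1) * c) * n * S ^ (2^t) := by ring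
        _ = c ^ (2^t) * n * S ^ (2^t) := by rw [h2]
        _ = n * (c * S) ^ (2^t) := by rw [mul_pow]; ring
    obtain ⟨t, ht⟩ := pow_unbounded_of_one_lt (n / c) hρ
    have hcontr : (q / (c * S)) ^ (2^t) ≤ n / c := by
      rw [div_pow, div_le_div_iff₀ (pow_pos hb _) hcpos]
      calc q ^ (2^t) * c ≤ n * (c * S) ^ (2^t) := hkey t
        _ = n * (c * S) ^ (2^t) := rfl
    have hmono : (q / (c * S)) ^ t ≤ (q / (c * S)) ^ (2^t) :=
      pow_le_pow_right₀ hρ.le (Nat.lt_two_pow_self (n := t)).le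
    linarith
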